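/- Let A be a k-subalgebra of k[x] with field of fractions K, let Φ ∈ A[y] be nonzero, g ∈ k[x] nonzero, and w ∈ Γ^n. If g^w is algebraic over K^w, then m_w^g(Φ) is at most the quotient of deg_y Φ^{w,g} divided by the field extension degree [K^w(g^w) : K^w]. -/

import Mathlib

open MvPolynomial Polynomial

set_option synthInstance.maxHeartbeats 1000000
set_option maxHeartbeats 1000000

variable {k : Type*} [Field k] [CharZero k] {n : ℕ}
variable {Γ : Type*} [AddCommGroup Γ] [LinearOrder Γ] [IsOrderedAddMonoid Γ]

/-- The `w`-degree of a multivariate polynomial, with `wdeg w 0 = ⊥ = -∞`. -/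
noncomputable def wdeg (w : Fin n → Γ) (f : MvPolynomial (Fin n) k) : WithBot Γ :=
  f.support.sup fun d => ((∑ i, d i • w i : Γ) : WithBot Γ)

/-- The leading `w`-homogeneous form `f^w` of `f`. -/
noncomputable def lform (w : Fin n → Γ) (f : MvPolynomial (Fin n) k) :
    MvPolynomial (Fin n) k :=
  letI : DecidableEq (WithBot Γ) := Classical.decEq _
  ∑ d ∈ f.support.filter
      (fun d => ((∑ i, d i • w i : Γ) : WithBot Γ) = wdeg w f),
    MvPolynomial.monomial d (f.coeff d)

/-- `deg_w^g Φ = max_i deg_w (φ_i g^i)` for `Φ = Σ_i φ_i y^i`. -/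
noncomputable def wdegG (w : Fin n → Γ) (g : MvPolynomial (Fin n) k)
    (Φ : Polynomial (MvPolynomial (Fin n) k)) : WithBot Γ :=
  Φ.support.sup fun i => wdeg w (Φ.coeff i * g ^ i)

/-- The leading form `Φ^{w,g}` of `Φ` for the grading in which `x_j` has weight `w_j`
and `y` has weight `deg_w g`: the sum of `φ_i^w y^i` over those `i` with
`deg_w (φ_i g^i) = deg_w^g Φ`. -/
noncomputable def pLform (w : Fin n → Γ) (g : MvPolynomial (Fin n) k)
    (Φ : Polynomial (MvPolynomial (Fin n) k)) : Polynomial (MvPolynomial (Fin n) k) :=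
  letI : DecidableEq (WithBot Γ) := Classical.decEq _
  ∑ i ∈ Φ.support.filter (fun i => wdeg w (Φ.coeff i * g ^ i) = wdegG w g Φ),
    Polynomial.C (lform w (Φ.coeff i)) * Polynomial.X ^ i

/-- `m_w^g(Φ) = min { i : deg_w^g (∂_y^i Φ) = deg_w ((∂_y^i Φ)(g)) }`. -/
noncomputable def mwg (w : Fin n → Γ) (g : MvPolynomial (Fin n) k)
    (Φ : Polynomial (MvPolynomial (Fin n) k)) : ℕ :=
  sInf {i : ℕ |
    wdegG w g (Polynomial.derivative^[i] Φ) = wdeg w ((Polynomial.derivative^[i] Φ).eval g)}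

/-- The `w`-degree of the differential form `dh_1 ∧ ⋯ ∧ dh_s`: the maximum over all
`s`-tuples of indices of the `w`-degree of the corresponding `s × s` Jacobian minor
plus the sum of the corresponding weights (noninjective tuples contribute `⊥`). -/
noncomputable def wedgeDeg (w : Fin n → Γ) {s : ℕ} (h : Fin s → MvPolynomial (Fin n) k) :
    WithBot Γ :=
  Finset.univ.sup fun e : Fin s → Fin n =>
    wdeg w (Matrix.det (Matrix.of fun a b : Fin s => MvPolynomial.pderiv (e b) (h a)))
      + ((∑ b, w (e b) : Γ) : WithBot Γ)

/-- The initial algebra `A^w`: the `k`-subalgebra generated by `f^w` for `f ∈ A \ {0}`. -/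
noncomputable def initAlg (w : Fin n → Γ) (A : Subalgebra k (MvPolynomial (Fin n) k)) :
    Subalgebra k (MvPolynomial (Fin n) k) :=
  Algebra.adjoin k (lform w '' ((A : Set (MvPolynomial (Fin n) k)) \ {0}))

/-- The field of fractions `K^w` of `A^w`, realized as a subfield of the fraction field
of `k[x]`. -/
noncomputable def KW (w : Fin n → Γ) (A : Subalgebra k (MvPolynomial (Fin n) k)) :
    Subfield (FractionRing (MvPolynomial (Fin n) k)) :=
  Subfield.closure
    (algebraMap (MvPolynomial (Fin n) k) (FractionRing (MvPolynomial (Fin n) k)) ''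
      (initAlg w A : Set (MvPolynomial (Fin n) k)))

/-- The field of fractions of a subalgebra `A` of `k[x]`, realized as a subfield of the
fraction field of `k[x]`. -/
noncomputable def fracSub (A : Subalgebra k (MvPolynomial (Fin n) k)) :
    Subfield (FractionRing (MvPolynomial (Fin n) k)) :=
  Subfield.closure
    (algebraMap (MvPolynomial (Fin n) k) (FractionRing (MvPolynomial (Fin n) k)) ''
      (A : Set (MvPolynomial (Fin n) k)))

/-- A polynomial is `w`-homogeneous if all its monomials have the same `w`-degree. -/
def IsWHom (w : Fin n → Γ) (f : MvPolynomial (Fin n) k) : Prop :=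
  ∃ γ : Γ, ∀ d ∈ f.support, (∑ i, d i • w i : Γ) = γ
section Chunk1
set_option linter.unusedSectionVars false
variable (w : Fin n → Γ)

/-- weight of an exponent vector -/
def dww (w : Fin n → Γ) (d : Fin n →₀ ℕ) : Γ := ∑ i, d i • w i

lemma dww_add (a b : Fin n →₀ ℕ) : dww w (a + b) = dww w a + dww w b := by
  simp [dww, add_smul, Finset.sum_add_distrib]

lemma wdeg_def (f : MvPolynomial (Fin n) k) :
    wdeg w f = f.support.sup fun d => ((dww w d : Γ) : WithBot Γ) := rfl

lemma le_wdeg {f : MvPolynomial (Fin n) k} {d} (h : d ∈ f.support) :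
    ((dww w d : Γ) : WithBot Γ) ≤ wdeg w f := Finset.le_sup (f := fun d => ((dww w d : Γ) : WithBot Γ)) h

lemma wdeg_ne_bot {f : MvPolynomial (Fin n) k} (hf : f ≠ 0) : wdeg w f ≠ ⊥ := by
  obtain ⟨d, hd⟩ := (MvPolynomial.support_nonempty.2 hf)
  exact fun h => by simpa [h] using le_wdeg w hd

lemma exists_wdeg {f : MvPolynomial (Fin n) k} (hf : f ≠ 0) :
    ∃ d ∈ f.support, wdeg w f = ((dww w d : Γ) : WithBot Γ) :=
  Finset.exists_mem_eq_sup _ (MvPolynomial.support_nonempty.2 hf) _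

/-- `f` is `w`-homogeneous of degree `γ`. -/
def WHomD (w : Fin n → Γ) (γ : Γ) (f : MvPolynomial (Fin n) k) : Prop :=
  ∀ d ∈ f.support, dww w d = γ

lemma whomD_wdeg {γ : Γ} {f : MvPolynomial (Fin n) k} (h : WHomD w γ f) (hf : f ≠ 0) :
    wdeg w f = (γ : WithBot Γ) := by
  obtain ⟨d, hd, hde⟩ := exists_wdeg w hf
  rw [hde, h d hd]

lemma coeff_lform [DecidableEq (WithBot Γ)] (f : MvPolynomial (Fin n) k) (e : Fin n →₀ ℕ) :
    (lform w f).coeff e =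
      if ((dww w e : Γ) : WithBot Γ) = wdeg w f then f.coeff e else 0 := by
  classical
  rw [lform, MvPolynomial.coeff_sum]
  rw [show (fun d => (MvPolynomial.monomial d (f.coeff d)).coeff e)
      = fun d => if d = e then f.coeff d else 0 from funext fun d => MvPolynomial.coeff_monomial _ _ _]
  rw [Finset.sum_ite_eq' _ e (fun d => f.coeff d)]
  simp only [Finset.mem_filter, MvPolynomial.mem_support_iff]
  by_cases h1 : ((dww w e : Γ) : WithBot Γ) = wdeg w f <;> by_cases h2 : f.coeff e = 0 <;>
    simp [h1, h2, dww]

lemma whomD_lform {γ : Γ} {f : MvPolynomial (Fin n) k} (h : wdeg w f = (γ : WithBot Γ)) :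
    WHomD w γ (lform w f) := by
  classical
  intro d hd
  rw [MvPolynomial.mem_support_iff, coeff_lform] at hd
  by_cases h1 : ((dww w d : Γ) : WithBot Γ) = wdeg w f
  · exact_mod_cast h1.trans h
  · simp [h1] at hd

lemma lform_ne_zero {f : MvPolynomial (Fin n) k} (hf : f ≠ 0) : lform w f ≠ 0 := by
  classical
  obtain ⟨d, hd, hde⟩ := exists_wdeg w hf
  intro h
  have := coeff_lform w f d
  rw [h, if_pos hde.symm] at this
  exact (MvPolynomial.mem_support_iff.1 hd) this.symm

lemma wdeg_sub_lform_lt {f : MvPolynomial (Fin n) k} (hf : f ≠ 0) :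
    wdeg w (f - lform w f) < wdeg w f := by
  classical
  obtain ⟨d₀, hd₀, hde⟩ := exists_wdeg w hf
  rw [wdeg_def, Finset.sup_lt_iff (by rw [hde]; exact bot_lt_iff_ne_bot.2 (by simp))]
  intro d hd
  rw [MvPolynomial.mem_support_iff, MvPolynomial.coeff_sub, coeff_lform] at hd
  by_cases h1 : ((dww w d : Γ) : WithBot Γ) = wdeg w f
  · simp [h1] at hd
  · have hdf : d ∈ f.support := by
      rw [MvPolynomial.mem_support_iff]; intro h; simp [h1, h] at hd
    exact lt_of_le_of_ne (le_wdeg w hdf) h1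

lemma lform_add_eq {γ : Γ} {h r : MvPolynomial (Fin n) k} (hh : WHomD w γ h) (h0 : h ≠ 0)
    (hr : wdeg w r < (γ : WithBot Γ)) :
    wdeg w (h + r) = (γ : WithBot Γ) ∧ lform w (h + r) = h := by
  classical
  have hcr : ∀ e, dww w e = γ → r.coeff e = 0 := by
    intro e he
    by_contra hc
    have := le_wdeg w (MvPolynomial.mem_support_iff.2 hc)
    rw [he] at this
    exact absurd (lt_of_le_of_lt this hr) (lt_irrefl _)
  have hwd : wdeg w (h + r) = (γ : WithBot Γ) := by
    apply le_antisymm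
    · rw [wdeg_def, Finset.sup_le_iff]
      intro d hd
      rcases Finset.mem_union.1 (MvPolynomial.support_add hd) with hd' | hd'
      · rw [hh d hd']
      · exact le_of_lt (lt_of_le_of_lt (le_wdeg w hd') hr)
    · obtain ⟨d, hd⟩ := MvPolynomial.support_nonempty.2 h0
      have hγ := hh d hd
      have : (h + r).coeff d ≠ 0 := by
        rw [MvPolynomial.coeff_add, hcr d hγ, add_zero]
        exact MvPolynomial.mem_support_iff.1 hd
      have := le_wdeg w (MvPolynomial.mem_support_iff.2 this)
      rwa [hγ] at this
  refine ⟨hwd, ?_⟩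
  ext e
  rw [coeff_lform, hwd]
  by_cases h1 : ((dww w e : Γ) : WithBot Γ) = (γ : WithBot Γ)
  · rw [if_pos h1, MvPolynomial.coeff_add, hcr e (by exact_mod_cast h1), add_zero]
  · rw [if_neg h1]
    by_contra hc
    have hm : e ∈ h.support := MvPolynomial.mem_support_iff.2 fun h' => hc h'.symm
    exact h1 (by rw [hh e hm])

end Chunk1

section Chunk2
set_option linter.unusedSectionVars false
variable (w : Fin n → Γ)

lemma lform_zero : lform w (0 : MvPolynomial (Fin n) k) = 0 := by
  classical
  simp [lform]

lemma whomD_mul {γ₁ γ₂ : Γ} {f g : MvPolynomial (Fin n) k} (hf : WHomD w γ₁ f)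
    (hg : WHomD w γ₂ g) : WHomD w (γ₁ + γ₂) (f * g) := by
  classical
  intro d hd
  obtain ⟨a, ha, b, hb, hab⟩ := Finset.mem_add.1 (MvPolynomial.support_mul f g hd)
  rw [← hab, dww_add, hf a ha, hg b hb]

lemma whomD_C (c : k) : WHomD w 0 (MvPolynomial.C c) := by
  classical
  intro d hd
  rw [MvPolynomial.C_apply, MvPolynomial.support_monomial] at hd
  split at hd
  · simp at hd
  · rw [Finset.mem_singleton] at hd; subst hd; simp [dww]

lemma wdeg_mul_le (f g : MvPolynomial (Fin n) k) :
    wdeg w (f * g) ≤ wdeg w f + wdeg w g := by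
  classical
  rw [wdeg_def, Finset.sup_le_iff]
  intro d hd
  obtain ⟨a, ha, b, hb, hab⟩ := Finset.mem_add.1 (MvPolynomial.support_mul f g hd)
  rw [← hab, dww_add, WithBot.coe_add]
  exact add_le_add (le_wdeg w ha) (le_wdeg w hb)

lemma wdeg_lform (f : MvPolynomial (Fin n) k) : wdeg w (lform w f) = wdeg w f := by
  by_cases hf : f = 0
  · rw [hf, lform_zero]
  · obtain ⟨γ, hγ⟩ := WithBot.ne_bot_iff_exists.1 (wdeg_ne_bot w hf)
    rw [← hγ]
    exact whomD_wdeg w (whomD_lform w hγ.symm) (lform_ne_zero w hf)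

lemma wdeg_add_le (f g : MvPolynomial (Fin n) k) :
    wdeg w (f + g) ≤ max (wdeg w f) (wdeg w g) := by
  rw [wdeg_def, Finset.sup_le_iff]
  intro d hd
  rcases Finset.mem_union.1 (MvPolynomial.support_add hd) with h | h
  · exact le_max_of_le_left (le_wdeg w h)
  · exact le_max_of_le_right (le_wdeg w h)

lemma wdeg_lform_mul {f g : MvPolynomial (Fin n) k} (hf : f ≠ 0) (hg : g ≠ 0) :
    wdeg w (f * g) = wdeg w f + wdeg w g ∧ lform w (f * g) = lform w f * lform w g := by
  obtain ⟨γf, hγf⟩ := WithBot.ne_bot_iff_exists.1 (wdeg_ne_bot w hf)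
  obtain ⟨γg, hγg⟩ := WithBot.ne_bot_iff_exists.1 (wdeg_ne_bot w hg)
  have hh : WHomD w (γf + γg) (lform w f * lform w g) :=
    whomD_mul w (whomD_lform w hγf.symm) (whomD_lform w hγg.symm)
  have h0 : lform w f * lform w g ≠ 0 :=
    mul_ne_zero (lform_ne_zero w hf) (lform_ne_zero w hg)
  have h1 : wdeg w ((f - lform w f) * g) < (γf : WithBot Γ) + (γg : WithBot Γ) := by
    refine lt_of_le_of_lt (wdeg_mul_le w _ _) ?_
    rw [← hγg]
    exact WithBot.add_lt_add_right (by simp) (hγf ▸ wdeg_sub_lform_lt w hf)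
  have h2 : wdeg w (lform w f * (g - lform w g)) < (γf : WithBot Γ) + (γg : WithBot Γ) := by
    refine lt_of_le_of_lt (wdeg_mul_le w _ _) ?_
    rw [wdeg_lform, ← hγf]
    exact WithBot.add_lt_add_left (by simp) (hγg ▸ wdeg_sub_lform_lt w hg)
  have hr : wdeg w (f * g - lform w f * lform w g) < ((γf + γg : Γ) : WithBot Γ) := by
    have hid : f * g - lform w f * lform w g
        = (f - lform w f) * g + lform w f * (g - lform w g) := by ring
    rw [hid, WithBot.coe_add]
    exact lt_of_le_of_lt (wdeg_add_le w _ _) (max_lt h1 h2)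
  have key := lform_add_eq w hh h0 hr
  have hid2 : lform w f * lform w g + (f * g - lform w f * lform w g) = f * g := by ring
  rw [hid2] at key
  exact ⟨by rw [key.1, WithBot.coe_add, hγf, hγg], key.2⟩

lemma wdeg_mul {f g : MvPolynomial (Fin n) k} (hf : f ≠ 0) (hg : g ≠ 0) :
    wdeg w (f * g) = wdeg w f + wdeg w g := (wdeg_lform_mul w hf hg).1

lemma lform_mul {f g : MvPolynomial (Fin n) k} (hf : f ≠ 0) (hg : g ≠ 0) :
    lform w (f * g) = lform w f * lform w g := (wdeg_lform_mul w hf hg).2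

lemma lform_pow {g : MvPolynomial (Fin n) k} (hg : g ≠ 0) (i : ℕ) :
    lform w (g ^ i) = lform w g ^ i := by
  induction i with
  | zero =>
      simp only [pow_zero]
      have : WHomD w 0 (1 : MvPolynomial (Fin n) k) := whomD_C w 1
      have key := lform_add_eq w this (one_ne_zero) (γ := 0)
        (r := 0) (by rw [show wdeg w (0 : MvPolynomial (Fin n) k) = ⊥ from rfl]; exact bot_lt_iff_ne_bot.2 (by simp))
      simpa using key.2
  | succ m ih =>
      rw [pow_succ, pow_succ, lform_mul w (pow_ne_zero m hg) hg, ih]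

lemma wdeg_pow {g : MvPolynomial (Fin n) k} (hg : g ≠ 0) (i : ℕ) :
    wdeg w (g ^ i) = i • wdeg w g := by
  induction i with
  | zero =>
      simp only [pow_zero, zero_smul]
      have : WHomD w 0 (1 : MvPolynomial (Fin n) k) := whomD_C w 1
      rw [whomD_wdeg w this one_ne_zero]; rfl
  | succ m ih =>
      rw [pow_succ, wdeg_mul w (pow_ne_zero m hg) hg, ih, succ_nsmul]
end Chunk2

section Chunk3
set_option linter.unusedSectionVars false
variable (w : Fin n → Γ) (g : MvPolynomial (Fin n) k)

lemma whomD_zero (γ : Γ) : WHomD w γ (0 : MvPolynomial (Fin n) k) := by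
  intro d hd; simp at hd

lemma whomD_add {γ : Γ} {f g : MvPolynomial (Fin n) k} (hf : WHomD w γ f)
    (hg : WHomD w γ g) : WHomD w γ (f + g) :=
  fun d hd => (Finset.mem_union.1 (MvPolynomial.support_add hd)).elim (hf d) (hg d)

lemma whomD_sum {γ : Γ} {ι : Type*} (s : Finset ι) (F : ι → MvPolynomial (Fin n) k)
    (h : ∀ i ∈ s, WHomD w γ (F i)) : WHomD w γ (∑ i ∈ s, F i) := by
  classical
  induction s using Finset.induction_on with
  | empty => simpa using whomD_zero w γ
  | insert _ _ hx ih =>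
      rw [Finset.sum_insert hx]
      exact whomD_add w (h _ (Finset.mem_insert_self _ _))
        (ih fun i hi => h i (Finset.mem_insert_of_mem hi))

lemma wdeg_sum_lt {γ : Γ} {ι : Type*} (s : Finset ι) (F : ι → MvPolynomial (Fin n) k)
    (h : ∀ i ∈ s, wdeg w (F i) < (γ : WithBot Γ)) :
    wdeg w (∑ i ∈ s, F i) < (γ : WithBot Γ) := by
  classical
  induction s using Finset.induction_on with
  | empty => simp [wdeg_def]
  | insert _ _ hx ih =>
      rw [Finset.sum_insert hx]
      refine lt_of_le_of_lt (wdeg_add_le w _ _) (max_lt (h _ (Finset.mem_insert_self _ _))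
        (ih fun i hi => h i (Finset.mem_insert_of_mem hi)))

lemma lform_of_whomD {γ : Γ} {f : MvPolynomial (Fin n) k} (hf : WHomD w γ f) (h0 : f ≠ 0) :
    lform w f = f := by
  have key := lform_add_eq w hf h0 (r := 0)
    (by rw [show wdeg w (0 : MvPolynomial (Fin n) k) = ⊥ from rfl]
        exact bot_lt_iff_ne_bot.2 (by simp))
  simpa using key.2

lemma lform_C (c : k) : lform w (MvPolynomial.C c) = MvPolynomial.C c := by
  by_cases hc : c = 0
  · simp [hc, lform_zero]
  · exact lform_of_whomD w (whomD_C w c) (by simpa using hc)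

lemma wdeg_C_mul {c : k} (hc : c ≠ 0) (f : MvPolynomial (Fin n) k) :
    wdeg w (MvPolynomial.C c * f) = wdeg w f := by
  by_cases hf : f = 0
  · simp [hf]
  · rw [wdeg_mul w (by simpa using hc) hf, whomD_wdeg w (whomD_C w c) (by simpa using hc)]
    exact zero_add _

lemma lform_C_mul {c : k} (hc : c ≠ 0) (f : MvPolynomial (Fin n) k) :
    lform w (MvPolynomial.C c * f) = MvPolynomial.C c * lform w f := by
  by_cases hf : f = 0
  · simp [hf, lform_zero]
  · rw [lform_mul w (by simpa using hc) hf, lform_C]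

lemma le_wdegG {Φ : Polynomial (MvPolynomial (Fin n) k)} {i : ℕ} (hi : i ∈ Φ.support) :
    wdeg w (Φ.coeff i * g ^ i) ≤ wdegG w g Φ :=
  Finset.le_sup (f := fun i => wdeg w (Φ.coeff i * g ^ i)) hi

lemma term_ne_zero (hg : g ≠ 0) {Φ : Polynomial (MvPolynomial (Fin n) k)} {i : ℕ}
    (hi : i ∈ Φ.support) : Φ.coeff i * g ^ i ≠ 0 :=
  mul_ne_zero (Polynomial.mem_support_iff.1 hi) (pow_ne_zero _ hg)

lemma wdegG_ne_bot (hg : g ≠ 0) {Φ : Polynomial (MvPolynomial (Fin n) k)} (hΦ : Φ ≠ 0) :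
    wdegG w g Φ ≠ ⊥ := by
  obtain ⟨i, hi⟩ := Polynomial.support_nonempty.2 hΦ
  intro h
  exact wdeg_ne_bot w (term_ne_zero g hg hi)
    (le_bot_iff.1 (h ▸ le_wdegG w g hi))

lemma coeff_pLform [DecidableEq (WithBot Γ)] (hg : g ≠ 0)
    {Φ : Polynomial (MvPolynomial (Fin n) k)} (hΦ : Φ ≠ 0) (j : ℕ) :
    (pLform w g Φ).coeff j =
      if wdeg w (Φ.coeff j * g ^ j) = wdegG w g Φ then lform w (Φ.coeff j) else 0 := by
  classical
  rw [pLform, Polynomial.finset_sum_coeff]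
  simp only [Polynomial.C_mul_X_pow_eq_monomial, Polynomial.coeff_monomial]
  rw [Finset.sum_ite_eq' _ j (fun i => lform w (Φ.coeff i))]
  simp only [Finset.mem_filter, Polynomial.mem_support_iff]
  by_cases h1 : wdeg w (Φ.coeff j * g ^ j) = wdegG w g Φ
  · by_cases h2 : Φ.coeff j = 0
    · have : wdegG w g Φ = ⊥ := by rw [← h1, h2, zero_mul]; rfl
      exact absurd this (wdegG_ne_bot w g hg hΦ)
    · simp [h1, h2]
  · simp [h1]

lemma pLform_ne_zero (hg : g ≠ 0) {Φ : Polynomial (MvPolynomial (Fin n) k)} (hΦ : Φ ≠ 0) :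
    pLform w g Φ ≠ 0 := by
  classical
  obtain ⟨D, hD⟩ := WithBot.ne_bot_iff_exists.1 (wdegG_ne_bot w g hg hΦ)
  obtain ⟨i, hi, hie⟩ : ∃ i ∈ Φ.support, wdegG w g Φ = wdeg w (Φ.coeff i * g ^ i) :=
    Finset.exists_mem_eq_sup _ (Polynomial.support_nonempty.2 hΦ) _
  intro h
  have := coeff_pLform w g hg hΦ i
  rw [h, if_pos hie.symm] at this
  exact lform_ne_zero w (Polynomial.mem_support_iff.1 hi) this.symm

/-- evaluation criterion : if the lform-evaluation of `pLform` is nonzero then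
`wdeg (Φ(g)) = wdegG Φ`. -/
lemma eval_top (hg : g ≠ 0) {Φ : Polynomial (MvPolynomial (Fin n) k)} (hΦ : Φ ≠ 0)
    (hne : Polynomial.eval (lform w g) (pLform w g Φ) ≠ 0) :
    wdeg w (Polynomial.eval g Φ) = wdegG w g Φ := by
  classical
  obtain ⟨D, hD⟩ := WithBot.ne_bot_iff_exists.1 (wdegG_ne_bot w g hg hΦ)
  set S := Φ.support.filter (fun i => wdeg w (Φ.coeff i * g ^ i) = wdegG w g Φ) with hS
  have heval : Polynomial.eval (lform w g) (pLform w g Φ)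
      = ∑ i ∈ S, lform w (Φ.coeff i) * lform w g ^ i := by
    rw [pLform]
    rw [Polynomial.eval_finset_sum]
    refine Finset.sum_congr (by rw [hS]; exact Finset.filter_congr_decidable ..) fun i _ => ?_
    rw [Polynomial.eval_mul, Polynomial.eval_C, Polynomial.eval_pow, Polynomial.eval_X]
  have hterm : ∀ i ∈ S, lform w (Φ.coeff i) * lform w g ^ i = lform w (Φ.coeff i * g ^ i) := by
    intro i hi
    rw [hS, Finset.mem_filter] at hi
    rw [lform_mul w (Polynomial.mem_support_iff.1 hi.1) (pow_ne_zero _ hg), lform_pow w hg]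
  have hwh : WHomD w D (Polynomial.eval (lform w g) (pLform w g Φ)) := by
    rw [heval]
    refine whomD_sum w _ _ fun i hi => ?_
    rw [hterm i hi]
    have hi' := Finset.mem_filter.1 (by rw [← hS]; exact hi)
    exact whomD_lform w (by rw [hi'.2, hD])
  have hsplit : Polynomial.eval g Φ = ∑ i ∈ Φ.support, Φ.coeff i * g ^ i := by
    rw [Polynomial.eval_eq_sum, Polynomial.sum_def]
  have hdecomp : Polynomial.eval g Φ = Polynomial.eval (lform w g) (pLform w g Φ)
      + ((∑ i ∈ S, (Φ.coeff i * g ^ i - lform w (Φ.coeff i * g ^ i)))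
         + ∑ i ∈ Φ.support.filter (fun i => ¬ wdeg w (Φ.coeff i * g ^ i) = wdegG w g Φ),
            Φ.coeff i * g ^ i) := by
    rw [heval, hsplit, ← Finset.sum_filter_add_sum_filter_not Φ.support
      (fun i => wdeg w (Φ.coeff i * g ^ i) = wdegG w g Φ), ← hS]
    rw [show ∑ i ∈ S, lform w (Φ.coeff i) * lform w g ^ i
        = ∑ i ∈ S, lform w (Φ.coeff i * g ^ i) from
        Finset.sum_congr hS.symm hterm,
      Finset.sum_sub_distrib]
    abel
  have hr : wdeg w ((∑ i ∈ S, (Φ.coeff i * g ^ i - lform w (Φ.coeff i * g ^ i)))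
         + ∑ i ∈ Φ.support.filter (fun i => ¬ wdeg w (Φ.coeff i * g ^ i) = wdegG w g Φ),
            Φ.coeff i * g ^ i) < (D : WithBot Γ) := by
    refine lt_of_le_of_lt (wdeg_add_le w _ _) (max_lt ?_ ?_)
    · refine wdeg_sum_lt w _ _ fun i hi => ?_
      have hi' := Finset.mem_filter.1 (by rw [← hS]; exact hi)
      refine lt_of_lt_of_le (wdeg_sub_lform_lt w (term_ne_zero g hg hi'.1)) ?_
      rw [hi'.2, hD]
    · refine wdeg_sum_lt w _ _ fun i hi => ?_
      have hi' := Finset.mem_filter.1 hi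
      exact lt_of_le_of_ne (hD ▸ le_wdegG w g hi'.1) (fun h => hi'.2 (h.trans hD))
  have key := lform_add_eq w hwh hne hr
  rw [← hdecomp] at key
  rw [key.1, hD]
end Chunk3

section Chunk4
set_option linter.unusedSectionVars false
variable (w : Fin n → Γ) (g : MvPolynomial (Fin n) k)

lemma wb_le_cancel (γ : Γ) (a b : WithBot Γ) : a + ↑γ ≤ b + ↑γ ↔ a ≤ b := by
  cases a <;> cases b <;> simp [← WithBot.coe_add]

lemma wb_eq_cancel (γ : Γ) (a b : WithBot Γ) : a + ↑γ = b + ↑γ ↔ a = b := by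
  cases a <;> cases b <;> simp [← WithBot.coe_add]

@[simp] lemma wdeg_zero : wdeg w (0 : MvPolynomial (Fin n) k) = ⊥ := by
  simp [wdeg_def]

lemma wdeg_term_succ (hg : g ≠ 0) (φ : MvPolynomial (Fin n) k) (i : ℕ) {γg : Γ}
    (hγg : wdeg w g = (γg : WithBot Γ)) :
    wdeg w (φ * g ^ (i + 1)) = wdeg w (φ * g ^ i) + (γg : WithBot Γ) := by
  by_cases hφ : φ = 0
  · simp [hφ]
  · rw [pow_succ, ← mul_assoc, wdeg_mul w (mul_ne_zero hφ (pow_ne_zero _ hg)) hg, hγg]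

lemma natCast_R (m : ℕ) :
    ((m : ℕ) : MvPolynomial (Fin n) k) = MvPolynomial.C ((m : ℕ) : k) :=
  (map_natCast MvPolynomial.C m).symm

lemma wdeg_mul_natCast (φ : MvPolynomial (Fin n) k) (j : ℕ) :
    wdeg w (φ * ((j + 1 : ℕ) : MvPolynomial (Fin n) k)) = wdeg w φ := by
  rw [mul_comm, natCast_R, wdeg_C_mul w (Nat.cast_ne_zero.2 (Nat.succ_ne_zero j))]

lemma lform_mul_natCast (φ : MvPolynomial (Fin n) k) (j : ℕ) :
    lform w (φ * ((j + 1 : ℕ) : MvPolynomial (Fin n) k))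
      = lform w φ * ((j + 1 : ℕ) : MvPolynomial (Fin n) k) := by
  rw [mul_comm, natCast_R, lform_C_mul w (Nat.cast_ne_zero.2 (Nat.succ_ne_zero j)), mul_comm,
    ← natCast_R]

instance : CharZero (MvPolynomial (Fin n) k) :=
  charZero_of_injective_algebraMap (MvPolynomial.C_injective (Fin n) k)

lemma wdegG_def (Φ : Polynomial (MvPolynomial (Fin n) k)) :
    wdegG w g Φ = Φ.support.sup fun i => wdeg w (Φ.coeff i * g ^ i) := rfl

lemma deriv_natDegree_R {p : Polynomial (MvPolynomial (Fin n) k)} (hp : 1 ≤ p.natDegree) :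
    Polynomial.derivative p ≠ 0 ∧
      (Polynomial.derivative p).natDegree = p.natDegree - 1 := by
  have hp0 : p ≠ 0 := fun h => by simp [h] at hp
  have hm1 : p.natDegree - 1 + 1 = p.natDegree := Nat.succ_pred_eq_of_pos hp
  have hco : (Polynomial.derivative p).coeff (p.natDegree - 1)
      = p.coeff p.natDegree * ((p.natDegree - 1 + 1 : ℕ) : MvPolynomial (Fin n) k) := by
    rw [Polynomial.coeff_derivative, hm1, ← hm1, Nat.cast_add, Nat.cast_one, hm1]
  have hne : (Polynomial.derivative p).coeff (p.natDegree - 1) ≠ 0 := by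
    rw [hco]
    exact mul_ne_zero (Polynomial.leadingCoeff_ne_zero.2 hp0)
      (Nat.cast_ne_zero.2 (Nat.succ_ne_zero _))
  exact ⟨fun h => hne (by simp [h]),
    le_antisymm (Polynomial.natDegree_derivative_le p)
      (Polynomial.le_natDegree_of_ne_zero hne)⟩

lemma bridge_step (hg : g ≠ 0) {γg : Γ} (hγg : wdeg w g = (γg : WithBot Γ))
    {Φ : Polynomial (MvPolynomial (Fin n) k)} (hΦ : Φ ≠ 0) {D : Γ}
    (hD : wdegG w g Φ = (D : WithBot Γ)) (hdeg : 1 ≤ (pLform w g Φ).natDegree) :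
    Polynomial.derivative Φ ≠ 0 ∧
      wdegG w g (Polynomial.derivative Φ) = ((D - γg : Γ) : WithBot Γ) ∧
      pLform w g (Polynomial.derivative Φ) = Polynomial.derivative (pLform w g Φ) := by
  classical
  set t := (pLform w g Φ).natDegree with htdef
  have hplne : pLform w g Φ ≠ 0 := pLform_ne_zero w g hg hΦ
  have hct : (pLform w g Φ).coeff t ≠ 0 := Polynomial.leadingCoeff_ne_zero.2 hplne
  rw [coeff_pLform w g hg hΦ] at hct
  have htop : wdeg w (Φ.coeff t * g ^ t) = wdegG w g Φ := by
    by_contra h; rw [if_neg h] at hct; exact hct rfl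
  have hcoeffd : ∀ j : ℕ, (Polynomial.derivative Φ).coeff j
      = Φ.coeff (j + 1) * ((j + 1 : ℕ) : MvPolynomial (Fin n) k) := by
    intro j; rw [Polynomial.coeff_derivative]; norm_cast
  have hwdegd : ∀ j : ℕ, wdeg w ((Polynomial.derivative Φ).coeff j * g ^ j)
      = wdeg w (Φ.coeff (j + 1) * g ^ j) := by
    intro j
    rw [hcoeffd j, show Φ.coeff (j + 1) * ((j + 1 : ℕ) : MvPolynomial (Fin n) k) * g ^ j
      = (Φ.coeff (j + 1) * g ^ j) * ((j + 1 : ℕ) : MvPolynomial (Fin n) k) by ring,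
      wdeg_mul_natCast]
  have hequiv : ∀ j : ℕ, wdeg w (Φ.coeff (j + 1) * g ^ j) = ((D - γg : Γ) : WithBot Γ)
      ↔ wdeg w (Φ.coeff (j + 1) * g ^ (j + 1)) = (D : WithBot Γ) := by
    intro j
    rw [← wb_eq_cancel γg (wdeg w (Φ.coeff (j + 1) * g ^ j)) ((D - γg : Γ) : WithBot Γ),
      ← wdeg_term_succ w g hg _ j hγg, ← WithBot.coe_add, sub_add_cancel]
  have hlequiv : ∀ j : ℕ, wdeg w (Φ.coeff (j + 1) * g ^ j) ≤ ((D - γg : Γ) : WithBot Γ) := by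
    intro j
    have h1 : wdeg w (Φ.coeff (j + 1) * g ^ (j + 1)) ≤ (D : WithBot Γ) := by
      by_cases hj : j + 1 ∈ Φ.support
      · exact hD ▸ le_wdegG w g hj
      · rw [Polynomial.notMem_support_iff.1 hj, zero_mul, wdeg_zero]; exact bot_le
    refine (wb_le_cancel γg _ _).1 ?_
    rw [← wdeg_term_succ w g hg _ j hγg, ← WithBot.coe_add, sub_add_cancel]
    exact h1
  have ht1 : t - 1 + 1 = t := Nat.succ_pred_eq_of_pos hdeg
  have htopd : wdeg w ((Polynomial.derivative Φ).coeff (t - 1) * g ^ (t - 1))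
      = ((D - γg : Γ) : WithBot Γ) := by
    rw [hwdegd]
    exact (hequiv (t - 1)).2 (by rw [ht1, htop, hD])
  have hd0 : Polynomial.derivative Φ ≠ 0 := by
    intro h
    rw [h, Polynomial.coeff_zero, zero_mul, wdeg_zero] at htopd
    exact absurd htopd (by simp)
  have hwdG : wdegG w g (Polynomial.derivative Φ) = ((D - γg : Γ) : WithBot Γ) := by
    apply le_antisymm
    · rw [wdegG_def, Finset.sup_le_iff]
      intro j hj
      rw [hwdegd j]
      exact hlequiv j
    · have hmem : t - 1 ∈ (Polynomial.derivative Φ).support := by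
        rw [Polynomial.mem_support_iff]
        intro h
        rw [h, zero_mul, wdeg_zero] at htopd
        exact absurd htopd (by simp)
      exact htopd ▸ le_wdegG w g hmem
  refine ⟨hd0, hwdG, ?_⟩
  ext j
  rw [Polynomial.coeff_derivative, coeff_pLform w g hg hd0, coeff_pLform w g hg hΦ,
    hwdG, hD, hwdegd j, hcoeffd j, lform_mul_natCast]
  by_cases hc : wdeg w (Φ.coeff (j + 1) * g ^ j) = ((D - γg : Γ) : WithBot Γ)
  · rw [if_pos hc, if_pos ((hequiv j).1 hc)]
    push_cast
    ring
  · rw [if_neg hc, if_neg (fun h => hc ((hequiv j).2 h)), zero_mul]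
end Chunk4

section Chunk5
set_option linter.unusedSectionVars false
variable (w : Fin n → Γ) (g : MvPolynomial (Fin n) k)

lemma bridge_iter (hg : g ≠ 0) {γg : Γ} (hγg : wdeg w g = (γg : WithBot Γ))
    {Φ : Polynomial (MvPolynomial (Fin n) k)} (hΦ : Φ ≠ 0) {D : Γ}
    (hD : wdegG w g Φ = (D : WithBot Γ)) :
    ∀ i ≤ (pLform w g Φ).natDegree,
      (Polynomial.derivative^[i] Φ ≠ 0) ∧
      wdegG w g (Polynomial.derivative^[i] Φ) = ((D - i • γg : Γ) : WithBot Γ) ∧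
      pLform w g (Polynomial.derivative^[i] Φ) = Polynomial.derivative^[i] (pLform w g Φ) ∧
      (pLform w g (Polynomial.derivative^[i] Φ)).natDegree
        = (pLform w g Φ).natDegree - i := by
  intro i
  induction i with
  | zero =>
      intro _
      exact ⟨hΦ, by rw [zero_smul, sub_zero]; exact hD, rfl, rfl⟩
  | succ m ih =>
      intro hm
      obtain ⟨h0, hw, hp, hn⟩ := ih (le_of_lt (Nat.lt_of_succ_le hm))
      have hdeg1 : 1 ≤ (pLform w g (Polynomial.derivative^[m] Φ)).natDegree := by omega
      obtain ⟨h0', hw', hp'⟩ := bridge_step w g hg hγg h0 hw hdeg1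
      rw [hp] at hdeg1
      have hder := deriv_natDegree_R (p := Polynomial.derivative^[m] (pLform w g Φ)) hdeg1
      rw [Function.iterate_succ_apply']
      refine ⟨h0', ?_, ?_, ?_⟩
      · rw [hw']
        congr 1
        rw [succ_nsmul, sub_sub]
      · rw [hp', hp]
        exact (Function.iterate_succ_apply' (⇑Polynomial.derivative) m (pLform w g Φ)).symm
      · rw [hp', hp]
        rw [hp] at hn
        rw [hder.2, hn]
        omega
end Chunk5

section Chunk6

/-- Over a char-zero field, nonconstant polynomials have nonzero derivative of degree one less. -/
lemma deriv_natDegree_K {K : Type*} [Field K] [CharZero K] {p : Polynomial K}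
    (hp : 1 ≤ p.natDegree) :
    Polynomial.derivative p ≠ 0 ∧ (Polynomial.derivative p).natDegree = p.natDegree - 1 := by
  have hp0 : p ≠ 0 := fun h => by simp [h] at hp
  have hm1 : p.natDegree - 1 + 1 = p.natDegree := Nat.succ_pred_eq_of_pos hp
  have hco : (Polynomial.derivative p).coeff (p.natDegree - 1)
      = p.coeff p.natDegree * ((p.natDegree - 1 + 1 : ℕ) : K) := by
    rw [Polynomial.coeff_derivative, hm1, ← hm1, Nat.cast_add, Nat.cast_one, hm1]
  have hne : (Polynomial.derivative p).coeff (p.natDegree - 1) ≠ 0 := by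
    rw [hco]
    exact mul_ne_zero (Polynomial.leadingCoeff_ne_zero.2 hp0)
      (Nat.cast_ne_zero.2 (Nat.succ_ne_zero _))
  exact ⟨fun h => hne (by simp [h]),
    le_antisymm (Polynomial.natDegree_derivative_le p)
      (Polynomial.le_natDegree_of_ne_zero hne)⟩

lemma exists_pow_mul_not_dvd {K : Type*} [Field K] {μ : Polynomial K} (hμ : 1 ≤ μ.natDegree) :
    ∀ N ψ, Polynomial.natDegree ψ ≤ N → ψ ≠ 0 →
      ∃ r σ, ψ = μ ^ r * σ ∧ ¬ μ ∣ σ := by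
  have hμ0 : μ ≠ 0 := fun h => by simp [h] at hμ
  intro N
  induction N with
  | zero =>
      intro ψ hN h0
      refine ⟨0, ψ, by simp, fun hdvd => ?_⟩
      have := Polynomial.natDegree_le_of_dvd hdvd h0
      omega
  | succ N ih =>
      intro ψ hN h0
      by_cases hdvd : μ ∣ ψ
      · obtain ⟨τ, rfl⟩ := hdvd
        have hτ0 : τ ≠ 0 := fun h => by simp [h] at h0
        have hdeg : τ.natDegree ≤ N := by
          have := Polynomial.natDegree_mul hμ0 hτ0
          omega
        obtain ⟨r, σ, hfac, hnd⟩ := ih τ hdeg hτ0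
        exact ⟨r + 1, σ, by rw [hfac, pow_succ]; ring, hnd⟩
      · exact ⟨0, ψ, by simp, hdvd⟩

lemma deriv_iter_eval {K L' : Type*} [Field K] [CharZero K] [Field L'] [Algebra K L']
    [CharZero L'] {x : L'} (hint : IsIntegral K x) {ψ : Polynomial K} (hψ : ψ ≠ 0)
    (hroot : Polynomial.aeval x ψ = 0) :
    ∃ r : ℕ, r * (minpoly K x).natDegree ≤ ψ.natDegree ∧
      Polynomial.aeval x (Polynomial.derivative^[r] ψ) ≠ 0 := by
  set μ := minpoly K x with hμdef
  have hμdeg : 1 ≤ μ.natDegree := minpoly.natDegree_pos hint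
  have hμ0 : μ ≠ 0 := fun h => by simp [h] at hμdeg
  obtain ⟨r, σ, hfac, hnd⟩ := exists_pow_mul_not_dvd hμdeg ψ.natDegree ψ le_rfl hψ
  have hσ0 : σ ≠ 0 := fun h => hnd (h ▸ dvd_zero μ)
  have hσx : Polynomial.aeval x σ ≠ 0 := fun h => hnd (minpoly.dvd K x h)
  have hμ'0 : Polynomial.derivative μ ≠ 0 := (deriv_natDegree_K hμdeg).1
  have hμ'x : Polynomial.aeval x (Polynomial.derivative μ) ≠ 0 := by
    intro h
    have hd := minpoly.dvd K x h
    have h1 := Polynomial.natDegree_le_of_dvd hd hμ'0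
    rw [← hμdef] at h1
    have h2 := (deriv_natDegree_K hμdeg).2
    omega
  have hbound : r * μ.natDegree ≤ ψ.natDegree := by
    have h1 : ψ.natDegree = (μ ^ r).natDegree + σ.natDegree := by
      rw [hfac, Polynomial.natDegree_mul (pow_ne_zero _ hμ0) hσ0]
    rw [Polynomial.natDegree_pow] at h1
    omega
  have key : ∀ i, i ≤ r → ∃ τ : Polynomial K,
      Polynomial.derivative^[i] (μ ^ r * σ) = μ ^ (r - i) * τ ∧
      Polynomial.aeval x τ = ((r.descFactorial i : ℕ) : L') *
        (Polynomial.aeval x (Polynomial.derivative μ)) ^ i * Polynomial.aeval x σ := by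
    intro i
    induction i with
    | zero => intro _; exact ⟨σ, by simp, by simp⟩
    | succ m ih =>
        intro hm
        obtain ⟨τ, hτ, hτx⟩ := ih (le_of_lt (Nat.lt_of_succ_le hm))
        have hrm : r - m = (r - (m + 1)) + 1 := by omega
        refine ⟨((r - m : ℕ) : Polynomial K) * Polynomial.derivative μ * τ
            + μ * Polynomial.derivative τ, ?_, ?_⟩
        · rw [Function.iterate_succ_apply', hτ, Polynomial.derivative_mul,
            Polynomial.derivative_pow, hrm]
          rw [show (r - (m + 1)) + 1 - 1 = r - (m + 1) from by omega]
          simp only [map_add, map_one, Polynomial.C_eq_natCast]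
          push_cast
          ring
        · have hx0 : Polynomial.aeval x μ = 0 := by rw [hμdef]; exact minpoly.aeval K x
          simp only [map_add, map_mul, hx0, zero_mul, add_zero, hτx, Polynomial.aeval_natCast]
          rw [Nat.descFactorial_succ]
          push_cast
          ring
  obtain ⟨τ, hτ, hτx⟩ := key r le_rfl
  refine ⟨r, hbound, ?_⟩
  rw [hfac, hτ, Nat.sub_self, pow_zero, one_mul, hτx]
  refine mul_ne_zero (mul_ne_zero ?_ (pow_ne_zero _ hμ'x)) hσx
  exact Nat.cast_ne_zero.2 (by rw [Nat.descFactorial_self]; exact Nat.factorial_ne_zero r)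

end Chunk6

section Final
set_option linter.unusedSectionVars false
variable (w : Fin n → Γ)

lemma lform_mem_KW (A : Subalgebra k (MvPolynomial (Fin n) k)) {f : MvPolynomial (Fin n) k}
    (hf : f ∈ A) (h0 : f ≠ 0) :
    algebraMap (MvPolynomial (Fin n) k) (FractionRing (MvPolynomial (Fin n) k)) (lform w f)
      ∈ KW w A := by
  apply Subfield.subset_closure
  refine Set.mem_image_of_mem _ ?_
  exact Algebra.subset_adjoin (Set.mem_image_of_mem _ ⟨hf, by simpa using h0⟩)

theorem stmt5' (A : Subalgebra k (MvPolynomial (Fin n) k))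
    (Φ : Polynomial (MvPolynomial (Fin n) k)) (hΦ : Φ ≠ 0) (hΦA : ∀ i, Φ.coeff i ∈ A)
    (g : MvPolynomial (Fin n) k) (hg : g ≠ 0)
    (halg : IsAlgebraic (KW w A)
      (algebraMap (MvPolynomial (Fin n) k) (FractionRing (MvPolynomial (Fin n) k))
        (lform w g))) :
    mwg w g Φ ≤
      (pLform w g Φ).natDegree /
        Module.finrank (KW w A)
          (IntermediateField.adjoin (KW w A)
            {algebraMap (MvPolynomial (Fin n) k) (FractionRing (MvPolynomial (Fin n) k))
              (lform w g)}) := by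
  classical
  set L := FractionRing (MvPolynomial (Fin n) k) with hLdef
  set ι := algebraMap (MvPolynomial (Fin n) k) L with hιdef
  have hιinj : Function.Injective ι := IsFractionRing.injective _ _
  haveI : CharZero (KW w A) := (algebraMap (KW w A) L).charZero
  set x : L := ι (lform w g) with hxdef
  have hint : IsIntegral (KW w A) x := halg.isIntegral
  set ψ := pLform w g Φ with hψdef
  have hψ0 : ψ ≠ 0 := pLform_ne_zero w g hg hΦ
  obtain ⟨D, hD⟩ := WithBot.ne_bot_iff_exists.1 (wdegG_ne_bot w g hg hΦ)
  obtain ⟨γg, hγg⟩ := WithBot.ne_bot_iff_exists.1 (wdeg_ne_bot w hg)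
  have hdpos : 1 ≤ (minpoly (KW w A) x).natDegree := minpoly.natDegree_pos hint
  -- a uniform r with the two needed properties
  obtain ⟨r, hrb, hrne⟩ : ∃ r : ℕ, r * (minpoly (KW w A) x).natDegree ≤ ψ.natDegree ∧
      Polynomial.eval (lform w g) (Polynomial.derivative^[r] ψ) ≠ 0 := by
    by_cases hz : Polynomial.eval (lform w g) ψ = 0
    · -- the algebraic case
      have hcoe : ∀ j, ι (ψ.coeff j) ∈ KW w A := by
        intro j
        rw [hψdef, coeff_pLform w g hg hΦ j]
        split_ifs with hc
        · refine lform_mem_KW w A (hΦA j) ?_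
          intro h
          rw [h, zero_mul] at hc
          exact wdegG_ne_bot w g hg hΦ (by rw [← hc]; simp)
        · rw [map_zero]; exact (KW w A).zero_mem
      set ψ' : Polynomial (KW w A) :=
        ∑ j ∈ ψ.support, Polynomial.C (⟨ι (ψ.coeff j), hcoe j⟩ : KW w A) * Polynomial.X ^ j
        with hψ'def
      have hψ'coeff : ∀ j, ψ'.coeff j
          = if j ∈ ψ.support then (⟨ι (ψ.coeff j), hcoe j⟩ : KW w A) else 0 := by
        intro j
        rw [hψ'def, Polynomial.finset_sum_coeff]
        simp only [Polynomial.C_mul_X_pow_eq_monomial, Polynomial.coeff_monomial]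
        exact Finset.sum_ite_eq' ψ.support j _
      have hmap : ψ'.map (algebraMap (KW w A) L) = ψ.map ι := by
        ext j
        rw [Polynomial.coeff_map, Polynomial.coeff_map, hψ'coeff j]
        split_ifs with h
        · rfl
        · rw [map_zero, Polynomial.notMem_support_iff.1 h, map_zero]
      have hmapψ : ψ.map ι ≠ 0 := fun h =>
        hψ0 (Polynomial.map_injective ι hιinj (by rw [h, Polynomial.map_zero]))
      have hψ'0 : ψ' ≠ 0 := fun h => hmapψ (by rw [← hmap, h, Polynomial.map_zero])
      have hroot : Polynomial.aeval x ψ' = 0 := by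
        rw [Polynomial.aeval_def, ← Polynomial.eval_map, hmap, hxdef,
          Polynomial.eval_map, Polynomial.eval₂_at_apply, hz, map_zero]
      obtain ⟨r, hrb', hne'⟩ := deriv_iter_eval hint hψ'0 hroot
      have hdmap : ∀ m : ℕ, (Polynomial.derivative^[m] ψ').map (algebraMap (KW w A) L)
          = (Polynomial.derivative^[m] ψ).map ι := by
        intro m
        induction m with
        | zero => exact hmap
        | succ mm ih =>
            rw [Function.iterate_succ_apply', Function.iterate_succ_apply',
              ← Polynomial.derivative_map, ih, Polynomial.derivative_map]
      refine ⟨r, ?_, ?_⟩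
      · have : ψ'.natDegree = ψ.natDegree := by
          rw [← Polynomial.natDegree_map_eq_of_injective
            ((algebraMap (KW w A) L).injective) ψ', hmap,
            Polynomial.natDegree_map_eq_of_injective hιinj]
        omega
      · intro h
        apply hne'
        rw [Polynomial.aeval_def, ← Polynomial.eval_map, hdmap r, hxdef,
          Polynomial.eval_map, Polynomial.eval₂_at_apply, h, map_zero]
    · exact ⟨0, by simp, hz⟩
  -- bridge down to the original polynomial
  have hrle : r ≤ ψ.natDegree := le_trans (by nlinarith) hrb
  obtain ⟨h0r, hwr, hpr, hnr⟩ := bridge_iter w g hg hγg.symm hΦ hD.symm r hrle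
  have hne : Polynomial.eval (lform w g) (pLform w g (Polynomial.derivative^[r] Φ)) ≠ 0 := by
    rw [hpr]; exact hrne
  have heq := eval_top w g hg h0r hne
  have hmem : mwg w g Φ ≤ r := Nat.sInf_le heq.symm
  refine le_trans hmem ?_
  rw [IntermediateField.adjoin.finrank hint]
  rw [Nat.le_div_iff_mul_le (by omega)]
  exact hrb
end Final

/-- If `A` is a `k`-subalgebra of `k[x]`, `Φ ∈ A[y]` nonzero, `g ∈ k[x]` nonzero, and
`g^w` is algebraic over `K^w`, then `m_w^g(Φ)` is at most the quotient of
`deg_y Φ^{w,g}` divided by `[K^w(g^w) : K^w]`. -/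
theorem stmt5 (A : Subalgebra k (MvPolynomial (Fin n) k))
    (Φ : Polynomial (MvPolynomial (Fin n) k)) (hΦ : Φ ≠ 0) (hΦA : ∀ i, Φ.coeff i ∈ A)
    (g : MvPolynomial (Fin n) k) (hg : g ≠ 0) (w : Fin n → Γ)
    (halg : IsAlgebraic (KW w A)
      (algebraMap (MvPolynomial (Fin n) k) (FractionRing (MvPolynomial (Fin n) k))
        (lform w g))) :
    mwg w g Φ ≤
      (pLform w g Φ).natDegree /
        Module.finrank (KW w A)
          (IntermediateField.adjoin (KW w A)
            {algebraMap (MvPolynomial (Fin n) k) (FractionRing (MvPolynomial (Fin n) k))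
              (lform w g)}) :=
  stmt5' w A Φ hΦ hΦA g hg halg
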